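/- arXiv:0806.1500 — 4 statements merged into one kernel-verified Lean document; each statement's English description precedes it below -/
import Mathlib

section
/- For compositions α and β, if β covers α in the composition order of Björner–Stanley (β is obtained from α either by adding 1 to a part, or by replacing a part α_i by the two consecutive parts (α_i+1−h, h) with 1 ≤ h ≤ α_i), then φ(α) is a subword of φ(β), where φ sends each part k to a·b^{k-1}, concatenates, and omits the initial a. -/
open List

def phi (l : List ℕ+) : List Bool :=
  ((l.map (fun k => true :: List.replicate ((k : ℕ) - 1) false)).flatten).tail

/-- The Björner–Stanley covering relation on compositions: `β` covers `α` iff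
`β` is obtained from `α` by adding `1` to a part, or by replacing a part `x`
by the two consecutive parts `(x + 1 - h, h)` with `1 ≤ h ≤ x`. -/
def CoverC (α β : List ℕ+) : Prop :=
  (∃ (l₁ : List ℕ+) (x : ℕ+) (l₂ : List ℕ+),
      α = l₁ ++ x :: l₂ ∧ β = l₁ ++ (x + 1) :: l₂) ∨
  (∃ (l₁ : List ℕ+) (x h : ℕ+) (l₂ : List ℕ+),
      α = l₁ ++ x :: l₂ ∧ h ≤ x ∧ β = l₁ ++ (x + 1 - h) :: h :: l₂)

lemma sublist_tail_of_sublist {u w : List Bool} (h : u <+ w) : u.tail <+ w.tail := by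
  cases h with
  | slnil => simp
  | cons a h => exact (List.tail_sublist _).trans h
  | cons_cons a h => exact h

/-- If `β` covers `α` in the composition order, then `φ(α)` is a subword of `φ(β)`. -/
theorem phi_sublist_of_cover (α β : List ℕ+) (h : CoverC α β) :
    phi α <+ phi β := by
  unfold phi
  apply sublist_tail_of_sublist
  rcases h with ⟨l₁, x, l₂, rfl, rfl⟩ | ⟨l₁, x, h, l₂, rfl, hle, rfl⟩
  · simp only [List.pure_def, List.bind_eq_flatMap, List.flatMap_append, List.flatMap_cons,
      List.map_append, List.map_cons, List.map_nil, List.flatten_append, List.flatten_cons,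
      List.flatten_nil, List.append_nil, List.nil_append, List.cons_append]
    apply List.Sublist.append_left
    apply List.cons_sublist_cons.2
    apply List.Sublist.append _ (List.Sublist.refl _)
    apply (List.replicate_sublist_replicate false).2
    have : ((x + 1 : ℕ+) : ℕ) = (x : ℕ) + 1 := by push_cast; ring
    omega
  · simp only [List.pure_def, List.bind_eq_flatMap, List.flatMap_append, List.flatMap_cons,
      List.map_append, List.map_cons, List.map_nil, List.flatten_append, List.flatten_cons,
      List.flatten_nil, List.append_nil, List.nil_append, List.cons_append]
    apply List.Sublist.append_left
    have hle' : (h : ℕ) ≤ (x : ℕ) := hle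
    have hc : ((x + 1 - h : ℕ+) : ℕ) = (x : ℕ) + 1 - (h : ℕ) := by
      rw [PNat.sub_coe]
      have h1 : h < x + 1 := by
        rw [← PNat.coe_lt_coe]
        push_cast
        omega
      simp [h1]
    have key : (x : ℕ) - 1 = ((x + 1 - h : ℕ+) : ℕ) - 1 + ((h : ℕ) - 1) := by
      rw [hc]
      have hxp := x.pos
      have hhp := h.pos
      omega
    apply List.cons_sublist_cons.2
    rw [key, List.replicate_add, List.append_assoc]
    exact List.Sublist.append_left (List.sublist_cons_self _ _) _
end

section
/- For words u ≤ w over the alphabet {a,b}, let (w choose u)_n denote the number of normal embeddings of u in w, i.e., embeddings ι with R(w) ⊆ ι where R(w) = {j : w_j = w_{j−1}} is the repetition set. Then the Möbius function of the subword order on {a,b}* satisfies μ(u,w) = (−1)^{|u|+|w|} (w choose u)_n. -/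
open List

/-- Words over the alphabet `{a,b}`: `true` encodes `a`, `false` encodes `b`. -/
abbrev Word := List Bool

/-- `s` is an embedding of `u` in `w`: listing the elements of `s` in increasing
order picks out the letters of `u` inside `w`. -/
def IsEmb (u w : Word) (s : Finset ℕ) : Prop :=
  (s.sort (· ≤ ·)).map (fun i => w[i]?) = u.map some

/-- The repetition set `R(w) = {j ≥ 1 : w_j = w_{j-1}}` (0-based positions). -/
def RepSet (w : Word) : Finset ℕ :=
  (Finset.Ico 1 w.length).filter (fun j => w[j]? = w[j-1]?)

/-- `(w choose u)_n`: number of normal embeddings of `u` in `w`, i.e.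
embeddings containing the repetition set of `w`. -/
noncomputable def nCount (u w : Word) : ℕ :=
  Nat.card {s : Finset ℕ // IsEmb u w s ∧ RepSet w ⊆ s}

theorem sortedLt_eq_of_mem_iff : ∀ {l₁ l₂ : List ℕ}, l₁.Pairwise (· < ·) → l₂.Pairwise (· < ·) →
    (∀ x, x ∈ l₁ ↔ x ∈ l₂) → l₁ = l₂ := by
  intro l₁
  induction l₁ with
  | nil =>
    intro l₂ _ _ h
    cases l₂ with
    | nil => rfl
    | cons b t => exact absurd ((h b).2 (mem_cons_self)) not_mem_nil
  | cons a t ih =>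
    intro l₂ h₁ h₂ h
    cases l₂ with
    | nil => exact absurd ((h a).1 (mem_cons_self)) not_mem_nil
    | cons b t₂ =>
      have hat : ∀ x ∈ t, a < x := fun x hx => (List.pairwise_cons.1 h₁).1 x hx
      have hbt : ∀ x ∈ t₂, b < x := fun x hx => (List.pairwise_cons.1 h₂).1 x hx
      have hab : a = b := by
        rcases mem_cons.1 ((h a).1 (mem_cons_self)) with h' | h'
        · exact h'
        · rcases mem_cons.1 ((h b).2 (mem_cons_self)) with h'' | h''
          · exact h''.symm
          · exact absurd (lt_trans (hat b h'') (hbt a h')) (lt_irrefl a)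
      subst hab
      have : t = t₂ := by
        refine ih h₁.of_cons h₂.of_cons fun x => ⟨fun hx => ?_, fun hx => ?_⟩
        · rcases mem_cons.1 ((h x).1 (mem_cons_of_mem _ hx)) with h' | h'
          · exact absurd (h' ▸ hat x hx) (lt_irrefl _)
          · exact h'
        · rcases mem_cons.1 ((h x).2 (mem_cons_of_mem _ hx)) with h' | h'
          · exact absurd (h' ▸ hbt x hx) (lt_irrefl _)
          · exact h'
      rw [this]

/-- splitting a sorted list at a threshold -/
theorem sorted_filter_split (m : ℕ) : ∀ {l : List ℕ}, l.Pairwise (· < ·) →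
    l = l.filter (fun x => decide (x < m)) ++ l.filter (fun x => !decide (x < m)) := by
  intro l
  induction l with
  | nil => simp
  | cons a t ih =>
    intro hs
    have hat : ∀ x ∈ t, a < x := fun x hx => (List.pairwise_cons.1 hs).1 x hx
    by_cases ha : a < m
    · simpa [filter_cons, ha] using ih hs.of_cons
    · have h1 : t.filter (fun x => decide (x < m)) = [] := by
        rw [filter_eq_nil_iff]
        intro x hx
        simp only [decide_eq_true_eq]
        have := hat x hx
        omega
      have h2 : ∀ x ∈ a :: t, ¬ x < m := by
        intro x hx
        rcases mem_cons.1 hx with h' | h'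
        · omega
        · have := hat x h'; omega
      have h3 : (a :: t).filter (fun x => !decide (x < m)) = a :: t := by
        rw [filter_eq_self]
        intro x hx
        simp [h2 x hx]
      rw [filter_cons]
      simp only [decide_eq_true_eq] at *
      rw [if_neg (by simp [ha]), h1, h3]
      simp [ha]
-- assume piece2 contents (will concatenate later); for dev, paste minimal decls


/-- greedy lemma: embedding `c^j ++ u` into `c^t ++ v` when `u` doesn't start with `c`. -/
theorem repl_subl {c : Bool} {u : Word} (hu : u.head? ≠ some c) :
    ∀ (t j : ℕ) (v : Word),
      (replicate j c ++ u <+ replicate t c ++ v ↔ replicate (j - t) c ++ u <+ v) := by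
  intro t
  induction t with
  | zero => intro j v; simp
  | succ t ih =>
    intro j v
    cases j with
    | zero =>
      simp only [Nat.zero_sub, replicate_zero, nil_append]
      rw [replicate_succ, cons_append]
      constructor
      · intro h
        rcases sublist_cons_iff.1 h with h' | ⟨r, hr, _⟩
        · have h2 : replicate (0:ℕ) c ++ u <+ replicate t c ++ v := by simpa using h'
          simpa using (ih 0 v).1 h2
        · have hr' : u = c :: r := by simpa using hr
          have : u.head? = some c := by rw [hr']; rfl
          exact absurd this hu
      · intro h
        exact (h.trans (sublist_append_right _ _)).cons c
    | succ j =>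
      rw [replicate_succ, replicate_succ, cons_append, cons_append, cons_sublist_cons,
        Nat.succ_sub_succ]
      exact ih j v

/-- the list of normal subwords of `w`, with multiplicity -/
def NS : Word → List Word
  | [] => [[]]
  | c :: t =>
    ((NS (t.dropWhile (· == c))).map
        (fun y => replicate ((t.takeWhile (· == c)).length + 1) c ++ y)) ++
    ((NS (t.dropWhile (· == c))).map
        (fun y => replicate ((t.takeWhile (· == c)).length) c ++ y))
termination_by w => w.length
decreasing_by
  all_goals simpa using Nat.lt_succ_of_le (dropWhile_sublist _).length_le

theorem takeWhile_eq_replicate (c : Bool) (l : Word) :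
    l.takeWhile (· == c) = replicate (l.takeWhile (· == c)).length c :=
  eq_replicate_of_mem (fun b hb => by simpa using mem_takeWhile_imp hb)

theorem head?_dropWhile_ne (c : Bool) (l : Word) :
    (l.dropWhile (· == c)).head? ≠ some c := by
  induction l with
  | nil => simp
  | cons a t ih =>
    rw [dropWhile_cons]
    by_cases h : a = c
    · simpa [h] using ih
    · simp [h]

theorem block_decomp (c : Bool) (t : Word) :
    c :: t = replicate ((t.takeWhile (· == c)).length + 1) c ++ t.dropWhile (· == c) := by
  rw [replicate_succ, cons_append]
  nth_rewrite 1 [← takeWhile_append_dropWhile (p := (· == c)) (l := t)]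
  rw [← takeWhile_eq_replicate]

theorem NS_sublist (w : Word) : ∀ x ∈ NS w, x <+ w := by
  induction w using NS.induct with
  | case1 => intro x hx; rw [NS] at hx; simp at hx; simp [hx]
  | case2 c t ih =>
    intro x hx
    rw [NS] at hx
    rcases mem_append.1 hx with h | h <;> rcases mem_map.1 h with ⟨y, hy, rfl⟩
    · rw [block_decomp c t]
      exact (ih y hy).append_left _
    · rw [block_decomp c t]
      exact Sublist.append ((replicate_sublist_replicate c).2 (Nat.le_succ _)) (ih y hy)

theorem count_inj_map {f : Word → Word} (hf : Function.Injective f) (L : List Word) (x : Word) :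
    (L.map f).count (f x) = L.count x := by
  induction L with
  | nil => simp
  | cons b t ih => simp [count_cons, ih, hf.eq_iff]

theorem count_map_append (A : Word) (L : List Word) (z : Word) :
    ((L.map (fun y => A ++ y)).count z) =
      if z.take A.length = A then L.count (z.drop A.length) else 0 := by
  by_cases h : z.take A.length = A
  · rw [if_pos h]
    have hz : z = A ++ z.drop A.length := by
      conv_lhs => rw [← take_append_drop A.length z, h]
    conv_lhs => rw [hz]
    exact count_inj_map (append_right_injective A) L (z.drop A.length)
  · rw [if_neg h, count_eq_zero]
    intro hz
    rcases mem_map.1 hz with ⟨y, _, hy⟩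
    exact h (by rw [← hy]; exact take_left' rfl)

theorem count_NS_cons (c : Bool) (t z : Word) :
    (NS (c :: t)).count z =
      (if z.take ((t.takeWhile (· == c)).length + 1)
          = replicate ((t.takeWhile (· == c)).length + 1) c
        then (NS (t.dropWhile (· == c))).count
          (z.drop ((t.takeWhile (· == c)).length + 1)) else 0) +
      (if z.take ((t.takeWhile (· == c)).length)
          = replicate ((t.takeWhile (· == c)).length) c
        then (NS (t.dropWhile (· == c))).count
          (z.drop ((t.takeWhile (· == c)).length)) else 0) := by
  have e1 := count_map_append (replicate ((t.takeWhile (· == c)).length + 1) c)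
    (NS (t.dropWhile (· == c))) z
  have e2 := count_map_append (replicate ((t.takeWhile (· == c)).length) c)
    (NS (t.dropWhile (· == c))) z
  rw [length_replicate] at e1 e2
  rw [NS, count_append, e1, e2]

theorem NS_count_self (w : Word) : (NS w).count w = 1 := by
  induction w using NS.induct with
  | case1 => rw [NS]; simp
  | case2 c t ih =>
    rw [count_NS_cons]
    set k := (t.takeWhile (· == c)).length with hk
    have hbd := block_decomp c t
    have h1 : (c :: t).take (k + 1) = replicate (k + 1) c := by
      rw [hbd, take_left' length_replicate]
    have h2 : (c :: t).drop (k + 1) = t.dropWhile (· == c) := by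
      rw [hbd, drop_left' length_replicate]
    have h3 : (c :: t).take k = replicate k c := by
      rw [hbd, take_append_of_le_length (by simp [hk]), take_replicate]
      congr 1; omega
    have h4 : (c :: t).drop k = c :: t.dropWhile (· == c) := by
      rw [hbd, drop_append_of_le_length (by simp [hk]), drop_replicate]
      simp [replicate_succ, hk]
    rw [if_pos h1, if_pos h3, h2, h4, ih]
    have : (NS (t.dropWhile (· == c))).count (c :: t.dropWhile (· == c)) = 0 := by
      rw [count_eq_zero]
      intro hmem
      have := (NS_sublist _ _ hmem).length_le
      simp at this
    rw [this]

/-- the signed sum over normal subwords containing `u` -/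
def Ssum (u w : Word) : ℤ :=
  ((NS w).map (fun x => if u <+ x then (-1:ℤ)^x.length else 0)).sum

theorem Ssum_of_not_sublist {u w : Word} (h : ¬ u <+ w) : Ssum u w = 0 := by
  rw [Ssum]
  have : ∀ x ∈ NS w, (if u <+ x then (-1:ℤ)^x.length else 0) = 0 := by
    intro x hx
    rw [if_neg]
    intro hux
    exact h (hux.trans (NS_sublist w x hx))
  rw [List.map_congr_left this]
  simp

theorem head?_replicate_append {n : ℕ} (hn : 0 < n) (c : Bool) (x : Word) :
    (replicate n c ++ x).head? = some c := by
  cases n with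
  | zero => omega
  | succ n => rfl

theorem Ssum_eq_zero (w : Word) : ∀ u : Word, u ≠ w → Ssum u w = 0 := by
  induction w using NS.induct with
  | case1 =>
    intro u hu
    rw [Ssum, NS]
    have : ¬ u <+ ([] : Word) := fun h => hu (sublist_nil.1 h)
    simp [this]
  | case2 c t ih =>
    intro u hu
    set k := (t.takeWhile (· == c)).length with hk
    set w' := t.dropWhile (· == c) with hw'
    set j := (u.takeWhile (· == c)).length with hj
    set u'' := u.dropWhile (· == c) with hu''
    have hdu : u = replicate j c ++ u'' := by
      rw [hj, hu'', ← takeWhile_eq_replicate, takeWhile_append_dropWhile]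
    have hhu : u''.head? ≠ some c := head?_dropWhile_ne c u
    have hhw : w'.head? ≠ some c := head?_dropWhile_ne c t
    have expand : ∀ (i : ℕ),
        ((NS w').map (fun y => if u <+ replicate i c ++ y
            then (-1:ℤ)^(replicate i c ++ y).length else 0)).sum
        = (-1:ℤ)^i * Ssum (replicate (j - i) c ++ u'') w' := by
      intro i
      rw [Ssum, ← List.sum_map_mul_left]
      congr 1
      apply List.map_congr_left
      intro y _
      rw [length_append, length_replicate, pow_add]
      by_cases h : u <+ replicate i c ++ y
      · rw [if_pos h, if_pos]
        conv at h => rw [hdu]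
        exact (repl_subl hhu i j y).1 h
      · rw [if_neg h, if_neg, mul_zero]
        intro h'
        exact h (by rw [hdu]; exact (repl_subl hhu i j y).2 h')
    have hsplit : Ssum u (c :: t) =
        (-1:ℤ)^(k+1) * Ssum (replicate (j - (k+1)) c ++ u'') w'
        + (-1:ℤ)^k * Ssum (replicate (j - k) c ++ u'') w' := by
      rw [Ssum, NS, map_append, sum_append, map_map, map_map]
      rw [show ((fun x => if u <+ x then (-1:ℤ)^x.length else 0) ∘
          (fun y => replicate (k+1) c ++ y))
        = (fun y => if u <+ replicate (k+1) c ++ y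
            then (-1:ℤ)^(replicate (k+1) c ++ y).length else 0) from rfl]
      rw [show ((fun x => if u <+ x then (-1:ℤ)^x.length else 0) ∘
          (fun y => replicate k c ++ y))
        = (fun y => if u <+ replicate k c ++ y
            then (-1:ℤ)^(replicate k c ++ y).length else 0) from rfl]
      rw [expand (k+1), expand k]
    rw [hsplit]
    rcases Nat.lt_or_ge k j with hkj | hkj
    · -- j ≥ k + 1 : show both Ssum terms vanish
      have term : ∀ i : ℕ, k ≤ i → Ssum (replicate (j - i) c ++ u'') w' = 0 ∨
          (j - i = 0 ∧ replicate (j - i) c ++ u'' = u'') := by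
        intro i hi
        by_cases hz : j - i = 0
        · exact Or.inr ⟨hz, by rw [hz]; simp⟩
        · left
          by_cases hsub : replicate (j - i) c ++ u'' <+ w'
          · apply ih
            intro heq
            apply hhw
            rw [← heq]
            exact head?_replicate_append (Nat.pos_of_ne_zero hz) c u''
          · exact Ssum_of_not_sublist hsub
      -- v₁ : j - k ≥ 1 always vanishes
      have hv1 : Ssum (replicate (j - k) c ++ u'') w' = 0 := by
        rcases term k le_rfl with h | ⟨h, _⟩
        · exact h
        · omega
      have hv0 : Ssum (replicate (j - (k+1)) c ++ u'') w' = 0 := by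
        rcases term (k+1) (by omega) with h | ⟨h0, he⟩
        · exact h
        · -- j = k+1, v₀ = u''
          rw [he]
          by_cases hsub : u'' <+ w'
          · apply ih
            intro heq
            apply hu
            rw [hdu, heq, show j = k + 1 by omega, block_decomp c t]
          · exact Ssum_of_not_sublist hsub
      rw [hv0, hv1]; ring
    · -- j ≤ k : both residues are u'' and signs cancel
      have h0 : j - (k+1) = 0 := by omega
      have h1 : j - k = 0 := by omega
      rw [h0, h1]
      simp only [replicate_zero, nil_append]
      rw [pow_succ]
      ring




theorem mem_repSet {j : ℕ} {w : Word} :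
    j ∈ RepSet w ↔ 1 ≤ j ∧ j < w.length ∧ w[j]? = w[j-1]? := by
  simp [RepSet, Finset.mem_filter, Finset.mem_Ico, and_assoc]

section Split

variable {c : Bool} {m : ℕ} {w' : Word}

theorem getElem?_blk_left (hm : True) {i : ℕ} (hi : i < m) :
    (replicate m c ++ w')[i]? = some c := by
  rw [getElem?_append_left (by simpa using hi), getElem?_replicate, if_pos hi]

theorem getElem?_blk_right {i : ℕ} (hi : m ≤ i) :
    (replicate m c ++ w')[i]? = w'[i - m]? := by
  rw [getElem?_append_right (by simpa using hi), length_replicate]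

theorem repSet_split (hm : 0 < m) (hh : w'.head? ≠ some c) (j : ℕ) :
    j ∈ RepSet (replicate m c ++ w') ↔
      (1 ≤ j ∧ j < m) ∨ ∃ i ∈ RepSet w', j = i + m := by
  rw [mem_repSet, length_append, length_replicate]
  constructor
  · rintro ⟨h1, h2, h3⟩
    rcases Nat.lt_trichotomy j m with hj | hj | hj
    · exact Or.inl ⟨h1, hj⟩
    · exfalso
      subst hj
      rw [getElem?_blk_right le_rfl, Nat.sub_self,
        getElem?_blk_left trivial (by omega)] at h3
      exact hh (by rw [head?_eq_getElem?]; exact h3)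
    · refine Or.inr ⟨j - m, mem_repSet.2 ⟨by omega, by omega, ?_⟩, by omega⟩
      rw [getElem?_blk_right (by omega), getElem?_blk_right (by omega)] at h3
      rw [show j - m - 1 = j - 1 - m by omega]
      exact h3
  · rintro (⟨h1, h2⟩ | ⟨i, hi, rfl⟩)
    · refine ⟨h1, by omega, ?_⟩
      rw [getElem?_blk_left trivial h2, getElem?_blk_left trivial (by omega)]
    · rcases mem_repSet.1 hi with ⟨h1, h2, h3⟩
      refine ⟨by omega, by omega, ?_⟩
      rw [getElem?_blk_right (by omega), getElem?_blk_right (by omega)]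
      rw [show i + m - m = i by omega, show i + m - 1 - m = i - 1 by omega]
      exact h3

end Split

/-- the sorted-list form of a normal embedding -/
def Pl (z w : Word) (l : List ℕ) : Prop :=
  l.Pairwise (· < ·) ∧ l.map (fun i => w[i]?) = z.map some ∧ ∀ j ∈ RepSet w, j ∈ l

def Pset (z w : Word) : Set (List ℕ) := {l | Pl z w l}

theorem splitP {c : Bool} {m : ℕ} {w' : Word} (hm : 0 < m) (hh : w'.head? ≠ some c)
    {a : ℕ} (ha : a ≤ 1) (z : Word) (l : List ℕ) :
    (Pl z (replicate m c ++ w') l ∧ (0 ∈ l ↔ a = 0)) ↔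
      (z.take (m - a) = replicate (m - a) c ∧
        ∃ l', Pl (z.drop (m - a)) w' l' ∧ l = range' a (m - a) ++ l'.map (· + m)) := by
  constructor
  · rintro ⟨⟨hsort, hmap, hrep⟩, h0⟩
    have hblk : ∀ x, 1 ≤ x → x < m → x ∈ l := fun x h1 h2 =>
      hrep x ((repSet_split hm hh x).2 (Or.inl ⟨h1, h2⟩))
    have hrep' : ∀ i ∈ RepSet w', i + m ∈ l := fun i hi =>
      hrep _ ((repSet_split hm hh _).2 (Or.inr ⟨i, hi, rfl⟩))
    have claim1 : l.filter (fun x => decide (x < m)) = range' a (m - a) := by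
      apply sortedLt_eq_of_mem_iff (hsort.sublist filter_sublist)
        (List.pairwise_lt_range' (s := a) (n := m - a))
      intro x
      rw [mem_filter, mem_range'_1, decide_eq_true_eq]
      constructor
      · rintro ⟨hx, hxm⟩
        refine ⟨?_, by omega⟩
        rcases Nat.eq_zero_or_pos x with rfl | hx1
        · have := h0.1 hx; omega
        · omega
      · rintro ⟨hax, hxm⟩
        have hxm' : x < m := by omega
        refine ⟨?_, hxm'⟩
        rcases Nat.eq_zero_or_pos x with rfl | hx1
        · exact h0.2 (by omega)
        · exact hblk x hx1 hxm'
    have claim2 := sorted_filter_split m hsort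
    set l2 := l.filter (fun x => !decide (x < m)) with hl2def
    have hge : ∀ x ∈ l2, m ≤ x := by
      intro x hx
      have := of_mem_filter hx
      simp only [Bool.not_eq_true', decide_eq_false_iff_not] at this
      omega
    set l' := l2.map (· - m) with hl'def
    have hl2 : l2 = l'.map (· + m) := by
      rw [hl'def, map_map]
      symm
      calc l2.map ((· + m) ∘ (· - m)) = l2.map id := by
            apply map_congr_left
            intro x hx
            have := hge x hx
            simp only [Function.comp_apply, id_eq]
            omega
        _ = l2 := map_id l2
    have hldecomp : l = range' a (m - a) ++ l'.map (· + m) := by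
      rw [← hl2, ← claim1]; exact claim2
    -- map equality analysis
    have hmap2 : replicate (m - a) (some c) ++ l'.map (fun i => w'[i]?) = z.map some := by
      rw [← hmap, hldecomp, map_append]
      congr 1
      · have hlen : (range' a (m - a)).length = m - a := length_range' ..
        have : ∀ b ∈ (range' a (m - a)).map (fun i => (replicate m c ++ w')[i]?),
            b = some c := by
          intro b hb
          rcases mem_map.1 hb with ⟨i, hi, rfl⟩
          rw [mem_range'_1] at hi
          exact getElem?_blk_left trivial (by omega)
        rw [eq_replicate_of_mem this, length_map, hlen]
      · conv_rhs => rw [map_map]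
        symm
        apply map_congr_left
        intro x _
        simp only [Function.comp_apply]
        rw [getElem?_blk_right (by omega), Nat.add_sub_cancel]
    have hsome : Function.Injective (map (some : Bool → Option Bool)) :=
      List.map_injective_iff.2 (Option.some_injective _)
    have htake : z.take (m - a) = replicate (m - a) c := by
      apply hsome
      rw [map_take, ← hmap2, take_left' (by rw [length_replicate]), map_replicate]
    have hdrop : (z.drop (m - a)).map some = l'.map (fun i => w'[i]?) := by
      rw [map_drop, ← hmap2, drop_left' (by rw [length_replicate])]
    refine ⟨htake, l', ⟨?_, hdrop.symm, ?_⟩, hldecomp⟩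
    · -- sortedness of l'
      rw [hl'def]
      apply List.pairwise_map.2
      apply Pairwise.imp_of_mem ?_ (hsort.sublist filter_sublist)
      intro x y hx hy hxy
      have := hge x hx
      omega
    · intro i hi
      have : i + m ∈ l := hrep' i hi
      rw [claim2] at this
      rcases mem_append.1 this with h | h
      · have := of_mem_filter h
        simp only [decide_eq_true_eq] at this
        omega
      · rw [hl'def]
        refine mem_map.2 ⟨i + m, h, by omega⟩
  · rintro ⟨htake, l', ⟨hs', hm', hr'⟩, rfl⟩
    have hmemA : ∀ x ∈ range' a (m - a), a ≤ x ∧ x < m := by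
      intro x hx
      rw [mem_range'_1] at hx
      omega
    have hmemB : ∀ x ∈ l'.map (· + m), m ≤ x := by
      intro x hx
      rcases mem_map.1 hx with ⟨i, _, rfl⟩
      omega
    constructor
    constructor
    · -- sortedness
      rw [pairwise_append]
      refine ⟨List.pairwise_lt_range' (s := a) (n := m - a), List.pairwise_map.2 (hs'.imp (by omega)), ?_⟩
      intro x hx y hy
      have := (hmemA x hx).2
      have := hmemB y hy
      omega
    constructor
    · -- map equality
      rw [map_append]
      have e1 : (range' a (m - a)).map (fun i => (replicate m c ++ w')[i]?)
          = replicate (m - a) (some c) := by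
        have : ∀ b ∈ (range' a (m - a)).map (fun i => (replicate m c ++ w')[i]?),
            b = some c := by
          intro b hb
          rcases mem_map.1 hb with ⟨i, hi, rfl⟩
          exact getElem?_blk_left trivial (hmemA i hi).2
        rw [eq_replicate_of_mem this, length_map, length_range']
      have e2 : (l'.map (· + m)).map (fun i => (replicate m c ++ w')[i]?)
          = (z.drop (m - a)).map some := by
        rw [map_map, ← hm']
        apply map_congr_left
        intro x _
        simp only [Function.comp_apply]
        rw [getElem?_blk_right (by omega), Nat.add_sub_cancel]
      rw [e1, e2, ← map_replicate (f := some), ← htake, ← map_append, take_append_drop]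
    · -- repetition set
      intro q hq
      rcases (repSet_split hm hh q).1 hq with ⟨h1, h2⟩ | ⟨i, hi, rfl⟩
      · exact mem_append.2 (Or.inl (mem_range'_1.2 ⟨by omega, by omega⟩))
      · exact mem_append.2 (Or.inr (mem_map.2 ⟨i, hr' i hi, rfl⟩))
    · -- 0 ∈ l ↔ a = 0
      constructor
      · intro h0
        rcases mem_append.1 h0 with h | h
        · have := (hmemA 0 h).1; omega
        · have := hmemB 0 h; omega
      · intro h0
        subst h0
        exact mem_append.2 (Or.inl (mem_range'_1.2 ⟨le_rfl, by omega⟩))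

theorem Pl_lt_length {z w : Word} {l : List ℕ} (h : Pl z w l) : ∀ i ∈ l, i < w.length := by
  intro i hi
  have : w[i]? ∈ l.map (fun i => w[i]?) := mem_map_of_mem hi
  rw [h.2.1] at this
  rcases mem_map.1 this with ⟨y, _, hy⟩
  rcases List.getElem?_eq_some_iff.1 hy.symm with ⟨hlt, _⟩
  exact hlt

theorem Pset_finite (z w : Word) : (Pset z w).Finite := by
  apply Set.Finite.of_finite_image (f := fun l => l.toFinset)
  · apply Set.Finite.subset (Finset.finite_toSet ((Finset.range w.length).powerset))
    rintro s ⟨l, hl, rfl⟩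
    simp only [Finset.coe_powerset, Set.mem_preimage, Set.mem_powerset_iff,
      Finset.coe_range, Finset.mem_coe]
    intro i hi
    rw [Finset.mem_coe, mem_toFinset] at hi
    simp only [Set.mem_Iio]
    exact Pl_lt_length hl i hi
  · intro l1 h1 l2 h2 heq
    simp only at heq
    apply sortedLt_eq_of_mem_iff h1.1 h2.1
    intro x
    rw [← mem_toFinset, heq, mem_toFinset]

theorem ncard_Pset_split {c : Bool} {m : ℕ} {w' : Word} (hm : 0 < m)
    (hh : w'.head? ≠ some c) (z : Word) :
    (Pset z (replicate m c ++ w')).ncard =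
      (if z.take m = replicate m c then (Pset (z.drop m) w').ncard else 0) +
      (if z.take (m-1) = replicate (m-1) c then (Pset (z.drop (m-1)) w').ncard else 0) := by
  classical
  have hsub : ∀ (p : List ℕ → Prop), {l | Pl z (replicate m c ++ w') l ∧ p l}.Finite :=
    fun p => (Pset_finite z _).subset (fun l hl => hl.1)
  have hsplit : Pset z (replicate m c ++ w') =
      {l | Pl z (replicate m c ++ w') l ∧ 0 ∈ l} ∪
      {l | Pl z (replicate m c ++ w') l ∧ 0 ∉ l} := by
    ext l
    simp only [Pset, Set.mem_setOf_eq, Set.mem_union]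
    tauto
  have hdisj : Disjoint {l | Pl z (replicate m c ++ w') l ∧ 0 ∈ l}
      {l | Pl z (replicate m c ++ w') l ∧ 0 ∉ l} := by
    rw [Set.disjoint_left]
    rintro l ⟨_, h0⟩ ⟨_, h0'⟩
    exact h0' h0
  rw [hsplit, Set.ncard_union_eq hdisj (hsub _) (hsub _)]
  congr 1
  · -- the `0 ∈ l` part, a = 0
    by_cases hc : z.take m = replicate m c
    · rw [if_pos hc]
      have : {l | Pl z (replicate m c ++ w') l ∧ 0 ∈ l} =
          (fun l' => range' 0 m ++ l'.map (· + m)) '' Pset (z.drop m) w' := by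
        ext l
        simp only [Set.mem_setOf_eq, Set.mem_image, Pset]
        constructor
        · intro h
          have := (splitP hm hh (le_of_lt Nat.one_pos) z l).1 ⟨h.1, by simp [h.2]⟩
          rcases this.2 with ⟨l', hl', hld⟩
          exact ⟨l', by simpa using hl', by simpa using hld.symm⟩
        · rintro ⟨l', hl', rfl⟩
          have := (splitP hm hh (le_of_lt Nat.one_pos) z
            (range' 0 (m - 0) ++ l'.map (· + m))).2
            ⟨by simpa using hc, l', by simpa using hl', rfl⟩
          simpa using this
      rw [this, Set.ncard_image_of_injective _ ?_]
      intro x y hxy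
      have := append_cancel_left hxy
      exact map_injective_iff.2 (fun a b => by omega) this
    · rw [if_neg hc]
      have : {l | Pl z (replicate m c ++ w') l ∧ 0 ∈ l} = ∅ := by
        ext l
        simp only [Set.mem_setOf_eq, Set.mem_empty_iff_false, iff_false]
        intro h
        have := (splitP hm hh (le_of_lt Nat.one_pos) z l).1 ⟨h.1, by simp [h.2]⟩
        exact hc (by simpa using this.1)
      rw [this, Set.ncard_empty]
  · -- the `0 ∉ l` part, a = 1
    by_cases hc : z.take (m-1) = replicate (m-1) c
    · rw [if_pos hc]
      have : {l | Pl z (replicate m c ++ w') l ∧ 0 ∉ l} =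
          (fun l' => range' 1 (m-1) ++ l'.map (· + m)) '' Pset (z.drop (m-1)) w' := by
        ext l
        simp only [Set.mem_setOf_eq, Set.mem_image, Pset]
        constructor
        · intro h
          have := (splitP hm hh le_rfl z l).1 ⟨h.1, by simp [h.2]⟩
          rcases this.2 with ⟨l', hl', hld⟩
          exact ⟨l', hl', hld.symm⟩
        · rintro ⟨l', hl', rfl⟩
          have := (splitP hm hh le_rfl z (range' 1 (m - 1) ++ l'.map (· + m))).2
            ⟨hc, l', hl', rfl⟩
          simpa using this
      rw [this, Set.ncard_image_of_injective _ ?_]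
      intro x y hxy
      have := append_cancel_left hxy
      exact map_injective_iff.2 (fun a b => by omega) this
    · rw [if_neg hc]
      have : {l | Pl z (replicate m c ++ w') l ∧ 0 ∉ l} = ∅ := by
        ext l
        simp only [Set.mem_setOf_eq, Set.mem_empty_iff_false, iff_false]
        intro h
        have := (splitP hm hh le_rfl z l).1 ⟨h.1, by simp [h.2]⟩
        exact hc this.1
      rw [this, Set.ncard_empty]

theorem ncard_Pset_eq_count (w : Word) : ∀ z : Word, (Pset z w).ncard = (NS w).count z := by
  induction w using NS.induct with
  | case1 =>
    intro z
    rw [NS]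
    by_cases hz : z = []
    · subst hz
      have : Pset ([] : Word) [] = {([] : List ℕ)} := by
        ext l
        simp only [Pset, Pl, Set.mem_setOf_eq, Set.mem_singleton_iff]
        constructor
        · rintro ⟨_, hmap, _⟩
          simpa using hmap
        · rintro rfl
          refine ⟨by simp, by simp, by simp [RepSet]⟩
      rw [this, Set.ncard_singleton]
      simp
    · have : Pset z ([] : Word) = ∅ := by
        ext l
        simp only [Pset, Pl, Set.mem_setOf_eq, Set.mem_empty_iff_false, iff_false]
        rintro ⟨_, hmap, _⟩
        apply hz
        have hlen : l.length = z.length := by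
          have := congrArg List.length hmap
          simpa using this
        cases z with
        | nil => rfl
        | cons b zt =>
          cases l with
          | nil => simp at hlen
          | cons i lt => simp at hmap
      rw [this, Set.ncard_empty]
      symm
      rw [count_eq_zero]
      simp [hz, eq_comm]
  | case2 c t ih =>
    intro z
    rw [count_NS_cons]
    have hbd := block_decomp c t
    have hh := head?_dropWhile_ne c t
    rw [show (c :: t) = replicate ((t.takeWhile (· == c)).length + 1) c ++ t.dropWhile (· == c)
      from hbd]
    rw [ncard_Pset_split (Nat.succ_pos _) hh z]
    simp only [Nat.succ_sub_one, Nat.succ_eq_add_one]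
    rw [ih, ih]

theorem nCount_eq_ncard (z w : Word) : nCount z w = (Pset z w).ncard := by
  rw [nCount, ← Nat.card_coe_set_eq]
  apply Nat.card_congr
  refine ⟨fun s => ⟨s.1.sort (· ≤ ·), ?_, ?_, ?_⟩, fun l => ⟨l.1.toFinset, ?_, ?_⟩, ?_, ?_⟩
  · exact (Finset.sortedLT_sort _).pairwise
  · exact s.2.1
  · exact fun j hj => (Finset.mem_sort _).2 (s.2.2 hj)
  · -- IsEmb for toFinset
    have hnd : l.1.Nodup := l.2.1.nodup
    have hle : l.1.Pairwise (· ≤ ·) := l.2.1.imp le_of_lt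
    have hsort_eq : l.1.toFinset.sort (· ≤ ·) = l.1 := (List.toFinset_sort _ hnd).2 hle
    rw [IsEmb, hsort_eq]
    exact l.2.2.1
  · exact fun j hj => mem_toFinset.2 (l.2.2.2 j hj)
  · intro s
    apply Subtype.ext
    exact Finset.sort_toFinset _ _
  · intro l
    apply Subtype.ext
    have hnd : l.1.Nodup := l.2.1.nodup
    have hle : l.1.Pairwise (· ≤ ·) := l.2.1.imp le_of_lt
    exact (List.toFinset_sort _ hnd).2 hle

theorem nCount_eq_count (z w : Word) : nCount z w = (NS w).count z := by
  rw [nCount_eq_ncard, ncard_Pset_eq_count]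

theorem nCount_self (w : Word) : nCount w w = 1 := by
  rw [nCount_eq_count, NS_count_self]

theorem sum_nu_eq_zero {u w : Word} (hne : u ≠ w) :
    ∑ z ∈ w.sublists.toFinset.filter (fun z => u <+ z),
      (-1:ℤ)^z.length * (nCount z w : ℤ) = 0 := by
  classical
  have key : ∑ z ∈ w.sublists.toFinset.filter (fun z => u <+ z),
      (-1:ℤ)^z.length * (nCount z w : ℤ) = Ssum u w := by
    have hg : ∀ z : Word, (-1:ℤ)^z.length * (nCount z w : ℤ) =
        (if u <+ z then (-1:ℤ)^z.length * (nCount z w : ℤ) else 0) ∨ True := fun z => Or.inr trivial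
    rw [Ssum, Finset.sum_list_map_count]
    -- rewrite LHS terms using nCount = count
    have step1 : ∑ z ∈ w.sublists.toFinset.filter (fun z => u <+ z),
        (-1:ℤ)^z.length * (nCount z w : ℤ)
        = ∑ z ∈ w.sublists.toFinset.filter (fun z => u <+ z),
          ((NS w).count z : ℤ) * (if u <+ z then (-1:ℤ)^z.length else 0) := by
      apply Finset.sum_congr rfl
      intro z hz
      rcases Finset.mem_filter.1 hz with ⟨_, huz⟩
      rw [if_pos huz, nCount_eq_count]
      ring
    rw [step1]
    have step2 : ∑ z ∈ w.sublists.toFinset.filter (fun z => u <+ z),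
        ((NS w).count z : ℤ) * (if u <+ z then (-1:ℤ)^z.length else 0)
        = ∑ z ∈ w.sublists.toFinset,
          ((NS w).count z : ℤ) * (if u <+ z then (-1:ℤ)^z.length else 0) := by
      apply Finset.sum_filter_of_ne
      intro z _ hz
      by_contra hc
      exact hz (by rw [if_neg hc, mul_zero])
    rw [step2]
    have step3 : ∑ z ∈ w.sublists.toFinset,
        ((NS w).count z : ℤ) * (if u <+ z then (-1:ℤ)^z.length else 0)
        = ∑ z ∈ (NS w).toFinset,
          ((NS w).count z : ℤ) * (if u <+ z then (-1:ℤ)^z.length else 0) := by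
      symm
      apply Finset.sum_subset
      · intro z hz
        rw [mem_toFinset] at hz ⊢
        exact mem_sublists.2 (NS_sublist w z hz)
      · intro z _ hz
        rw [mem_toFinset] at hz
        rw [count_eq_zero.2 hz]
        simp
    rw [step3]
    apply Finset.sum_congr rfl
    intro z _
    rw [nsmul_eq_mul]
    congr 1
    exact congrArg _ (congrArg (fun i => @List.count Word i z (NS w))
      (lawful_beq_subsingleton _ _))
  rw [show ∀ S : Finset Word, ∑ z ∈ S, (-1:ℤ)^(z.length) * (nCount z w : ℤ)
    = ∑ z ∈ S, (-1:ℤ)^(z.length) * (nCount z w : ℤ) from fun _ => rfl]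
  rw [key]
  exact Ssum_eq_zero w u hne


/-- The Möbius function of the subword order on `{a,b}*` (characterized by its
defining recursion) satisfies `μ(u,w) = (-1)^{|u|+|w|} (w choose u)_n`. -/
theorem mobius_subword (μ : Word → Word → ℤ)
    (h1 : ∀ x, μ x x = 1)
    (h2 : ∀ x y : Word, x <+ y → x ≠ y →
      ∑ z ∈ y.sublists.toFinset.filter (fun z => x <+ z), μ z y = 0)
    (h3 : ∀ x y : Word, ¬ x <+ y → μ x y = 0)
    (u w : Word) (h : u <+ w) :
    μ u w = (-1) ^ (u.length + w.length) * (nCount u w : ℤ) := by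
  classical
  suffices H : ∀ (k : ℕ) (u : Word), u <+ w → w.length - u.length = k →
      μ u w = (-1) ^ (u.length + w.length) * (nCount u w : ℤ) from H _ u h rfl
  intro k
  induction k using Nat.strong_induction_on with
  | _ k ihk =>
    intro u hu hk
    by_cases heq : u = w
    · subst heq
      rw [h1, nCount_self]
      have : ((-1:ℤ)) ^ (u.length + u.length) = 1 := Even.neg_one_pow ⟨u.length, rfl⟩
      rw [this]
      ring
    · have hsum := h2 u w hu heq
      set F := w.sublists.toFinset.filter (fun z => u <+ z) with hF
      have huF : u ∈ F := Finset.mem_filter.2 ⟨mem_toFinset.2 (mem_sublists.2 hu), Sublist.refl u⟩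
      set ν : Word → ℤ := fun z => (-1:ℤ) ^ (z.length + w.length) * (nCount z w : ℤ) with hν
      have hIH : ∀ z ∈ F, z ≠ u → μ z w = ν z := by
        intro z hz hne
        rcases Finset.mem_filter.1 hz with ⟨hzs, huz⟩
        have hzw : z <+ w := mem_sublists.1 (mem_toFinset.1 hzs)
        have hlt : u.length < z.length :=
          lt_of_le_of_ne huz.length_le (fun e => hne (huz.eq_of_length e).symm)
        have hle := hzw.length_le
        exact ihk (w.length - z.length) (by omega) z hzw rfl
      have hnu : ∑ z ∈ F, ν z = 0 := by
        have e : ∀ z, ν z = ((-1:ℤ)^z.length * (nCount z w : ℤ)) * (-1:ℤ)^w.length := by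
          intro z
          show (-1:ℤ) ^ (z.length + w.length) * (nCount z w : ℤ)
            = (-1:ℤ)^z.length * (nCount z w : ℤ) * (-1:ℤ)^w.length
          rw [pow_add]
          ring
        calc ∑ z ∈ F, ν z
            = (∑ z ∈ F, (-1:ℤ)^z.length * (nCount z w : ℤ)) * (-1:ℤ)^w.length := by
              rw [Finset.sum_mul]
              exact Finset.sum_congr rfl (fun z _ => e z)
          _ = 0 := by rw [sum_nu_eq_zero heq]; ring
      have e1 : ∑ z ∈ F.erase u, μ z w + μ u w = 0 := by
        rw [Finset.sum_erase_add F _ huF]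
        exact hsum
      have e2 : ∑ z ∈ F.erase u, ν z + ν u = 0 := by
        rw [Finset.sum_erase_add F _ huF]
        exact hnu
      have e3 : ∑ z ∈ F.erase u, μ z w = ∑ z ∈ F.erase u, ν z :=
        Finset.sum_congr rfl (fun z hz => hIH z (Finset.mem_of_mem_erase hz)
          (Finset.ne_of_mem_erase hz))
      rw [e3] at e1
      have : μ u w = ν u := by linarith
      exact this
end

section
/- The poset A*_d of words over {a,b} with no d+1 consecutive b's, under subword order, is locally finite: every interval [u,w] is finite. Moreover, every interval [u,w] with u ≤ w is graded by word length: every maximal chain in [u,w] has length |w| − |u|. -/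
open List

/-- `w` has no `d+1` consecutive `b`'s (i.e. `w ∈ A*_d`). -/
def Avoids (d : ℕ) (w : Word) : Prop :=
  ¬ (List.replicate (d + 1) false <:+: w)

/-- Covering relation in the poset `A*_d`. -/
def CovD (d : ℕ) (x y : Word) : Prop :=
  Avoids d x ∧ Avoids d y ∧ x <+ y ∧ x ≠ y ∧
    ∀ z : Word, Avoids d z → x <+ z → z <+ y → z = x ∨ z = y

/-- length of the leading run of `b`'s (`false`s). -/
def leadB : Word → ℕ
  | [] => 0
  | true :: _ => 0
  | false :: t => leadB t + 1

lemma replicate_leadB_prefix : ∀ w : Word, List.replicate (leadB w) false <+: w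
  | [] => by simp [leadB]
  | true :: t => by simp [leadB]
  | false :: t => by
      simpa [leadB, List.replicate_succ, List.cons_prefix_cons] using
        replicate_leadB_prefix t

lemma leadB_le_of_avoids {d : ℕ} {w : Word} (h : Avoids d w) : leadB w ≤ d := by
  by_contra hlt
  push_neg at hlt
  apply h
  have h1 : List.replicate (d + 1) (false : Bool) <+: List.replicate (leadB w) false := by
    refine ⟨List.replicate (leadB w - (d + 1)) false, ?_⟩
    rw [← List.replicate_add]
    congr 1
    omega
  exact (h1.trans (replicate_leadB_prefix w)).isInfix

lemma avoids_of_cons {d : ℕ} {c : Bool} {w : Word} (h : Avoids d (c :: w)) :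
    Avoids d w := fun hi => h (hi.trans (List.suffix_cons c w).isInfix)

lemma avoids_cons_true {d : ℕ} {w : Word} (h : Avoids d w) : Avoids d (true :: w) := by
  intro hi
  rcases List.infix_cons_iff.mp hi with hp | hi'
  · rcases hp with ⟨s, hs⟩
    rw [List.replicate_succ] at hs
    simp at hs
  · exact h hi'

lemma le_leadB_of_prefix : ∀ {w : Word} {n : ℕ},
    List.replicate n (false : Bool) <+: w → n ≤ leadB w := by
  intro w n
  induction n generalizing w with
  | zero => intro _; omega
  | succ n ih =>
    intro hp
    rw [List.replicate_succ] at hp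
    rcases w with _ | ⟨c, t⟩
    · simp at hp
    · rw [List.cons_prefix_cons] at hp
      obtain ⟨rfl, hp⟩ := hp
      have := ih hp
      simp [leadB]; omega

lemma avoids_cons_false {d : ℕ} {w : Word} (h : Avoids d w)
    (hl : leadB w + 1 ≤ d) : Avoids d (false :: w) := by
  intro hi
  rcases List.infix_cons_iff.mp hi with hp | hi'
  · rw [List.replicate_succ, List.cons_prefix_cons] at hp
    have := le_leadB_of_prefix hp.2
    omega
  · exact h hi'

/-- Key step: between avoiding words `x < y` there is an avoiding word of length `|y| - 1`. -/
lemma step (d : ℕ) : ∀ y x : Word, x <+ y → x ≠ y → Avoids d x → Avoids d y →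
    ∃ z : Word, x <+ z ∧ z <+ y ∧ Avoids d z ∧ z.length + 1 = y.length ∧
      leadB z ≤ max (leadB x) (leadB y) := by
  intro y
  induction y with
  | nil =>
    intro x hs hne _ _
    exact absurd (List.sublist_nil.mp hs) hne
  | cons c y' ih =>
    intro x hs hne hx hy
    have hy' : Avoids d y' := avoids_of_cons hy
    rcases List.sublist_cons_iff.mp hs with hsy' | ⟨x', rfl, hx'⟩
    · -- x <+ y'
      by_cases hxy : x = y'
      · subst hxy
        exact ⟨x, List.Sublist.refl x, List.sublist_cons_self c x, hx, by simp, le_max_left _ _⟩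
      · cases c with
        | false =>
          refine ⟨y', hsy', List.sublist_cons_self _ _, hy', by simp, ?_⟩
          have : leadB (false :: y') = leadB y' + 1 := rfl
          omega
        | true =>
          obtain ⟨z', h1, h2, h3, h4, h5⟩ := ih x hsy' hxy hx hy'
          exact ⟨true :: z', h1.trans (List.sublist_cons_self _ _),
            List.Sublist.cons₂ _ h2, avoids_cons_true h3, by simp [h4],
            by simp [leadB]⟩
    · -- x = c :: x'
      have hx'av : Avoids d x' := avoids_of_cons hx
      have hne' : x' ≠ y' := fun hh => hne (by rw [hh])
      obtain ⟨z', h1, h2, h3, h4, h5⟩ := ih x' hx' hne' hx'av hy'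
      refine ⟨c :: z', List.Sublist.cons₂ _ h1, List.Sublist.cons₂ _ h2, ?_, by simp [h4], ?_⟩
      · cases c with
        | true => exact avoids_cons_true h3
        | false =>
          apply avoids_cons_false h3
          have hxl : leadB (false :: x') = leadB x' + 1 := rfl
          have hyl : leadB (false :: y') = leadB y' + 1 := rfl
          have := leadB_le_of_avoids hx
          have := leadB_le_of_avoids hy
          omega
      · cases c with
        | true => simp [leadB]
        | false =>
          have hxl : leadB (false :: x') = leadB x' + 1 := rfl
          have hyl : leadB (false :: y') = leadB y' + 1 := rfl
          have hzl : leadB (false :: z') = leadB z' + 1 := rfl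
          omega

lemma cov_length {d : ℕ} {x y : Word} (h : CovD d x y) : x.length + 1 = y.length := by
  obtain ⟨hx, hy, hs, hne, hmin⟩ := h
  obtain ⟨z, h1, h2, h3, h4, _⟩ := step d y x hs hne hx hy
  rcases hmin z h3 h1 h2 with rfl | rfl
  · exact h4
  · omega

lemma chain_len (d : ℕ) : ∀ c : List Word, c.Chain' (CovD d) →
    ∀ u w : Word, c.head? = some u → c.getLast? = some w →
      w.length + 1 = u.length + c.length := by
  intro c
  induction c with
  | nil => intro _ u w h; simp at h
  | cons x t ih =>
    intro hc u w hh hl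
    simp at hh; subst hh
    cases t with
    | nil =>
      simp at hl; subst hl; simp
    | cons y t' =>
      rw [List.getLast?_cons_cons] at hl
      replace hc := List.isChain_cons_cons.mp hc
      have h1 := cov_length hc.1
      have h2 := ih hc.2 y w rfl hl
      simp at h2 ⊢
      omega

/-- `A*_d` is locally finite, and every interval `[u,w]` is graded by length:
every maximal chain from `u` to `w` has length `|w| - |u|` (so it has
`|w| - |u| + 1` elements). -/
theorem restricted_subword_locally_finite_graded (d : ℕ) (u w : Word)
    (hu : Avoids d u) (hw : Avoids d w) (h : u <+ w) :
    {z : Word | u <+ z ∧ z <+ w ∧ Avoids d z}.Finite ∧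
    ∀ c : List Word, c.head? = some u → c.getLast? = some w →
      c.Chain' (CovD d) → c.length = w.length - u.length + 1 := by
  constructor
  · apply Set.Finite.subset (w.sublists).toFinset.finite_toSet
    intro z hz
    simp only [Finset.mem_coe, List.mem_toFinset, List.mem_sublists]
    exact hz.2.1
  · intro c hh hl hc
    have := chain_len d c hc u w hh hl
    have hle := h.length_le
    omega
end

section
/- Let A*_d be words over {a,b} avoiding b^{d+1} as a factor, under subword order. If u ≤ w in A*_d and w covers u in A*_d, then w covers u in A* as well; i.e., A*_d is a subposet of A* closed under the property that covering relations in the restricted poset coincide with covering relations of A* between elements of A*_d. -/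
open List

/-- Covering relation in the full subword order `A*`. -/
def CoversA (u w : Word) : Prop :=
  u <+ w ∧ u ≠ w ∧ ∀ v : Word, u <+ v → v <+ w → v = u ∨ v = w

/-- If `u` is a proper sublist of `w`, there is a position `p` (the first gap of the
leftmost embedding of `u` in `w`) such that `u` and `w` agree up to `p`, the letter
`w[p]` differs from `u[p]` (when the latter exists), and the rest of `u` embeds in
the rest of `w` after position `p`. -/
lemma firstDiff : ∀ (w u : Word), u <+ w → u ≠ w →
    ∃ p c, p ≤ u.length ∧ u.take p = w.take p ∧ w[p]? = some c ∧
      (∀ (hp : p < u.length), u[p] ≠ c) ∧ u.drop p <+ w.drop (p+1) := by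
  intro w
  induction w with
  | nil => intro u h hne; exact absurd (List.sublist_nil.mp h) hne
  | cons c w' ih =>
    intro u h hne
    match u with
    | [] =>
      exact ⟨0, c, by simp, by simp, by simp, by simp, by simp⟩
    | a' :: u' =>
      by_cases hac : a' = c
      · subst hac
        have h' : u' <+ w' := List.cons_sublist_cons.mp h
        have hne' : u' ≠ w' := by intro e; exact hne (by rw [e])
        obtain ⟨p, c', hp, hta, hg, hd, hdr⟩ := ih u' h' hne'
        refine ⟨p + 1, c', by simpa using hp, by simp [hta], by simpa using hg, ?_,
          by simpa using hdr⟩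
        intro hlt
        have : p < u'.length := by simpa using hlt
        simpa using hd this
      · have h' : a' :: u' <+ w' := by
          cases h with
          | cons _ h => exact h
          | cons_cons => exact absurd rfl hac
        exact ⟨0, c, Nat.zero_le _, by simp, by simp, fun _ => by simpa using hac,
          by simpa using h'⟩

/-- If `u < w` in `A*_d` with a length gap of at least `2`, there is an element of
`A*_d` strictly between them: insert the first mismatched letter of `w` into `u`.
This insertion cannot create a block of `d+1` consecutive `b`'s. -/
lemma exists_mid (d : ℕ) (u w : Word) (hu : Avoids d u) (hw : Avoids d w)
    (hsub : u <+ w) (hlen : u.length + 2 ≤ w.length) :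
    ∃ z : Word, Avoids d z ∧ u <+ z ∧ z <+ w ∧ z.length = u.length + 1 := by
  have hne : u ≠ w := by intro e; subst e; omega
  obtain ⟨p, c, hp, htake, hg, hdiff, hdrop⟩ := firstDiff w u hsub hne
  have hpw : p < w.length := by
    by_contra hh
    simp [List.getElem?_eq_none (by omega : w.length ≤ p)] at hg
  have hlen1 : (w.take (p+1)).length = p + 1 := by
    rw [List.length_take]; omega
  refine ⟨w.take (p+1) ++ u.drop p, ?_, ?_, ?_, ?_⟩
  · -- the new word avoids `b^{d+1}`
    rintro ⟨s, t, hst⟩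
    set z := w.take (p+1) ++ u.drop p with hz
    set i := s.length with hi
    have hidx : ∀ j, j < d + 1 → z[i + j]? = some false := by
      intro j hj
      rw [← hst]
      rw [List.append_assoc, List.getElem?_append_right (by omega),
        Nat.add_sub_cancel_left, List.getElem?_append_left (by simpa using hj)]
      simp [hj]
    rcases Nat.lt_or_ge p i with hcase | hcase
    · -- the factor lies inside `u.drop p`, contradicting `Avoids d u`
      have h3 : z.drop i = (u.drop p).drop (i - (p+1)) := by
        rw [hz, List.drop_append, List.drop_eq_nil_of_le (by omega)]
        simp [hlen1]
      have h2 : z.drop i = List.replicate (d+1) false ++ t := by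
        rw [← hst, List.append_assoc]; simp [hi]
      have h4 : List.replicate (d+1) false <:+: u := by
        have : List.replicate (d+1) false <:+: z.drop i := by
          rw [h2]; exact ⟨[], t, by simp⟩
        rw [h3] at this
        exact this.trans (((List.drop_suffix _ _).trans (List.drop_suffix p u)).isInfix)
      exact hu h4
    rcases Nat.lt_or_ge p (i + d) with hcase2 | hcase2
    · -- the factor would contain both positions `p` and `p+1`, which carry
      -- the two distinct letters `c` and `u[p]`; impossible for an all-`b` factor
      have hzp : z[p]? = some false := by
        have := hidx (p - i) (by omega)
        rwa [Nat.add_sub_cancel' (by omega)] at this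
      have hzp1 : z[p+1]? = some false := by
        have := hidx (p + 1 - i) (by omega)
        rwa [Nat.add_sub_cancel' (by omega)] at this
      have hzp' : z[p]? = some c := by
        rw [hz, List.getElem?_append_left (by omega), List.getElem?_take]
        simpa using hg
      have hzp1' : z[p+1]? = u[p]? := by
        rw [hz, List.getElem?_append_right (by omega), hlen1, Nat.sub_self]
        simp [List.getElem?_drop]
      rw [hzp'] at hzp
      rw [hzp1', List.getElem?_eq_some_iff] at hzp1
      obtain ⟨hlt, hval⟩ := hzp1
      exact hdiff hlt (by rw [hval]; exact (by simpa using hzp))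
    · -- the factor lies inside `w.take (p+1)`, contradicting `Avoids d w`
      have h2 : z.take (i + (d+1)) = s ++ List.replicate (d+1) false := by
        rw [← hst]
        exact List.take_left' (by simp [hi])
      have h3 : z.take (i + (d+1)) = (w.take (p+1)).take (i + (d+1)) := by
        rw [hz, List.take_append]
        have h0 : i + (d+1) - (w.take (p+1)).length = 0 := by rw [hlen1]; omega
        rw [h0]
        simp
      have hpre : s ++ List.replicate (d+1) false <+: w := by
        rw [← h2, h3]
        exact (List.take_prefix _ _).trans (List.take_prefix _ _)
      obtain ⟨t', ht'⟩ := hpre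
      exact hw ⟨s, t', ht'⟩
  · -- `u <+ z`
    conv_lhs => rw [← List.take_append_drop p u]
    rw [htake, List.take_succ]
    exact List.Sublist.append (List.sublist_append_left _ _) (List.Sublist.refl _)
  · -- `z <+ w`
    conv_rhs => rw [← List.take_append_drop (p+1) w]
    exact List.Sublist.append (List.Sublist.refl _) hdrop
  · simp [hlen1]; omega

/-- Covering relations in `A*_d` coincide with covering relations of `A*`
between elements of `A*_d`: if `w` covers `u` in `A*_d` then `w` covers `u`
in `A*`. -/
theorem covD_covers (d : ℕ) (u w : Word) (h : CovD d u w) : CoversA u w := by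
  obtain ⟨hau, haw, hsub, hne, hmin⟩ := h
  have hlt : u.length < w.length :=
    Nat.lt_of_le_of_ne hsub.length_le (fun e => hne (hsub.eq_of_length e))
  have hlen : w.length = u.length + 1 := by
    by_contra hgt
    obtain ⟨z, haz, h1, h2, h3⟩ := exists_mid d u w hau haw hsub (by omega)
    rcases hmin z haz h1 h2 with e | e
    · rw [e] at h3; omega
    · rw [e] at h3
      have := h2.length_le
      omega
  refine ⟨hsub, hne, fun v h1 h2 => ?_⟩
  have l1 := h1.length_le
  have l2 := h2.length_le
  rcases Nat.eq_or_lt_of_le l1 with e | e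
  · exact Or.inl (h1.eq_of_length e).symm
  · exact Or.inr (h2.eq_of_length (by omega))
end
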